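/- For x > 1, (2/π) ∫_{-1}^{1} log|x - t| · √(1 - t²) dt = x² - x·√(x² - 1) - log(2(x - √(x² - 1))) - 1/2. -/

import Mathlib

open Real MeasureTheory


lemma cos_log_series {b : ℝ} (hb0 : 0 < b) (hb1 : b < 1) (θ : ℝ) :
    HasSum (fun n : ℕ => b ^ n * Real.cos (n * θ) / n)
      (Real.log (1 - 2 * b * Real.cos θ + b ^ 2) * (-1 / 2)) := by
  set z : ℂ := b * Complex.exp (θ * Complex.I) with hzdef
  have hznorm : ‖z‖ < 1 := by
    rw [hzdef]
    simp only [norm_mul, Complex.norm_real, Real.norm_eq_abs,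
      Complex.norm_exp_ofReal_mul_I, mul_one, abs_of_pos hb0]
    exact hb1
  have H := Complex.hasSum_taylorSeries_neg_log hznorm
  have Hre := H.mapL Complex.reCLM
  have hterm : ∀ n : ℕ, Complex.reCLM (z ^ n / n) = b ^ n * Real.cos (n * θ) / n := by
    intro n
    have hzn : z ^ n = (b ^ n : ℝ) * Complex.exp ((n * θ : ℝ) * Complex.I) := by
      rw [hzdef, mul_pow, ← Complex.exp_nat_mul]
      push_cast
      ring_nf
    rw [hzn]
    have : ((b ^ n : ℝ) : ℂ) * Complex.exp ((n * θ : ℝ) * Complex.I) / (n : ℂ)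
        = (((b ^ n / n : ℝ)) : ℂ) * Complex.exp ((n * θ : ℝ) * Complex.I) := by
      push_cast; ring
    rw [this]
    simp only [Complex.reCLM_apply, Complex.re_ofReal_mul, Complex.exp_ofReal_mul_I_re]
    push_cast
    ring
  have hlog : Complex.reCLM (-Complex.log (1 - z))
      = Real.log (1 - 2 * b * Real.cos θ + b ^ 2) * (-1 / 2) := by
    have hz1 : (1 : ℂ) - z ≠ 0 :=
      sub_ne_zero.mpr (fun h => by rw [← h] at hznorm; simp at hznorm)
    have habs : (‖1 - z‖) ^ 2 = 1 - 2 * b * Real.cos θ + b ^ 2 := by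
      rw [Complex.sq_norm, Complex.normSq_apply]
      have hre : (1 - z).re = 1 - b * Real.cos θ := by
        simp [hzdef, Complex.exp_ofReal_mul_I_re]
      have him : (1 - z).im = -(b * Real.sin θ) := by
        simp [hzdef, Complex.exp_ofReal_mul_I_im]
      rw [hre, him]
      have := Real.sin_sq_add_cos_sq θ
      nlinarith [this]
    have habs_pos : 0 < ‖1 - z‖ := by
      simpa using hz1
    simp only [map_neg, Complex.reCLM_apply, Complex.log_re]
    rw [← habs, Real.log_pow]
    push_cast
    ring
  rw [← hlog]
  exact Hre.congr_fun fun n => (hterm n).symm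

lemma hasDerivAt_sin_const_mul (c θ : ℝ) :
    HasDerivAt (fun t : ℝ => Real.sin (c * t)) (Real.cos (c * θ) * c) θ := by
  simpa using ((hasDerivAt_id θ).const_mul c).sin

lemma integral_cos_mul_sin_sq {n : ℕ} (hn : 1 ≤ n) (hn2 : n ≠ 2) :
    ∫ θ in (0:ℝ)..π, Real.cos (n * θ) * Real.sin θ ^ 2 = 0 := by
  set m : ℝ := (n : ℝ) with hm
  have hm0 : m ≠ 0 := by simp only [hm]; exact_mod_cast Nat.one_le_iff_ne_zero.mp hn
  have hmp2 : m + 2 ≠ 0 := by positivity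
  have hmm2 : m - 2 ≠ 0 := by
    simp only [hm, sub_ne_zero]
    exact_mod_cast hn2
  have key : ∀ θ ∈ Set.uIcc (0:ℝ) π, HasDerivAt
      (fun t : ℝ => Real.sin (m*t)/(2*m) - Real.sin ((m+2)*t)/(4*(m+2))
        - Real.sin ((m-2)*t)/(4*(m-2)))
      (Real.cos (m*θ) * Real.sin θ ^ 2) θ := by
    intro θ _
    have h := (((hasDerivAt_sin_const_mul m θ).div_const (2*m)).sub
      ((hasDerivAt_sin_const_mul (m+2) θ).div_const (4*(m+2)))).sub
      ((hasDerivAt_sin_const_mul (m-2) θ).div_const (4*(m-2)))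
    convert h using 1 <;> try rfl
    rw [show (m+2)*θ = m*θ + 2*θ by ring, show (m-2)*θ = m*θ - 2*θ by ring,
      Real.cos_add, Real.cos_sub, Real.sin_sq_eq_half_sub]
    field_simp
    ring
  rw [intervalIntegral.integral_eq_sub_of_hasDerivAt key
    (Continuous.intervalIntegrable (by continuity) _ _)]
  have h1 : Real.sin (m*π) = 0 := by rw [hm]; exact Real.sin_nat_mul_pi n
  have h2 : Real.sin ((m+2)*π) = 0 := by
    rw [show m + 2 = ((n + 2 : ℕ) : ℝ) by push_cast [hm]; ring]
    exact Real.sin_nat_mul_pi _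
  have h3 : Real.sin ((m-2)*π) = 0 := by
    rw [show m - 2 = (((n : ℤ) - 2 : ℤ) : ℝ) by push_cast [hm]; ring]
    exact Real.sin_int_mul_pi _
  simp [h1, h2, h3]

lemma integral_cos_two_mul_sin_sq :
    ∫ θ in (0:ℝ)..π, Real.cos (2 * θ) * Real.sin θ ^ 2 = -(π/4) := by
  have key : ∀ θ ∈ Set.uIcc (0:ℝ) π, HasDerivAt
      (fun t : ℝ => Real.sin (2*t)/4 - t/4 - Real.sin (4*t)/16)
      (Real.cos (2*θ) * Real.sin θ ^ 2) θ := by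
    intro θ _
    have h1 := ((hasDerivAt_sin_const_mul 2 θ).div_const 4).sub
      ((hasDerivAt_id θ).div_const 4)
    have h2 := h1.sub ((hasDerivAt_sin_const_mul 4 θ).div_const 16)
    convert h2 using 1 <;> try rfl
    have hs := Real.sin_sq_eq_half_sub θ
    have hc : Real.cos (4*θ) = 2 * Real.cos (2*θ)^2 - 1 := by
      have := Real.cos_two_mul (2*θ)
      rw [show (2:ℝ)*(2*θ) = 4*θ by ring] at this
      exact this
    nlinarith [hs, hc]
  rw [intervalIntegral.integral_eq_sub_of_hasDerivAt key (by
    apply Continuous.intervalIntegrable; continuity)]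
  have h4 : Real.sin (4*π) = 0 := by
    rw [show (4:ℝ)*π = ((4:ℕ):ℝ)*π by norm_num]; exact Real.sin_nat_mul_pi 4
  have h2 : Real.sin (2*π) = 0 := by
    rw [show (2:ℝ)*π = ((2:ℕ):ℝ)*π by norm_num]; exact Real.sin_nat_mul_pi 2
  simp [h4, h2]

lemma J_val {b : ℝ} (hb0 : 0 < b) (hb1 : b < 1) :
    ∫ θ in (0:ℝ)..π, Real.log (1 - 2*b*Real.cos θ + b^2) * Real.sin θ ^ 2
      = π * b ^ 2 / 4 := by
  set F : ℕ → ℝ → ℝ :=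
    fun n θ => (-2 * b ^ n / n) * (Real.cos (n * θ) * Real.sin θ ^ 2) with hF
  have hpt : ∀ θ : ℝ,
      Real.log (1 - 2*b*Real.cos θ + b^2) * Real.sin θ ^ 2 = ∑' n, F n θ := by
    intro θ
    have h := (cos_log_series hb0 hb1 θ).mul_right (-2 * Real.sin θ ^ 2)
    have e : (Real.log (1 - 2*b*Real.cos θ + b^2) * (-1/2)) * (-2 * Real.sin θ^2)
        = Real.log (1 - 2*b*Real.cos θ + b^2) * Real.sin θ ^ 2 := by ring
    rw [e] at h
    rw [← h.tsum_eq]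
    congr 1; funext n; simp only [hF]; ring
  have hFcont : ∀ n, Continuous (F n) := by
    intro n; simp only [hF]
    fun_prop
  have hFint : ∀ n, MeasureTheory.IntegrableOn (F n) (Set.Ioc 0 π) := fun n =>
    (hFcont n).integrableOn_Ioc
  have hbound : ∀ (n : ℕ) (θ : ℝ), ‖F n θ‖ ≤ 2 * b ^ n := by
    intro n θ
    simp only [hF, Real.norm_eq_abs]
    rcases Nat.eq_zero_or_pos n with rfl | hn
    · simp
    have hn1 : (1:ℝ) ≤ n := by exact_mod_cast hn
    have hc : |Real.cos (n*θ)| ≤ 1 := Real.abs_cos_le_one _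
    have hs : |Real.sin θ ^ 2| ≤ 1 := by
      rw [abs_of_nonneg (sq_nonneg _)]; exact Real.sin_sq_le_one θ
    have h1 : |(-2 * b ^ n / n : ℝ)| ≤ 2 * b ^ n := by
      rw [abs_div, abs_of_pos (by positivity : (0:ℝ) < (n:ℝ))]
      rw [show |(-2 * b ^ n : ℝ)| = 2 * b ^ n by
        rw [abs_of_nonpos (by nlinarith [pow_pos hb0 n])]; ring]
      rw [div_le_iff₀ (by positivity)]
      nlinarith [pow_pos hb0 n]
    calc |(-2 * b ^ n / n : ℝ) * (Real.cos (n*θ) * Real.sin θ ^ 2)|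
        = |(-2 * b ^ n / n : ℝ)| * |Real.cos (n*θ) * Real.sin θ ^ 2| := abs_mul _ _
      _ ≤ (2 * b ^ n) * 1 := by
          apply mul_le_mul h1 _ (abs_nonneg _) (by positivity)
          rw [abs_mul]
          exact mul_le_one₀ hc (abs_nonneg _) hs
      _ = 2 * b ^ n := mul_one _
  have hsum : Summable fun n : ℕ =>
      ∫ θ in Set.Ioc (0:ℝ) π, ‖F n θ‖ ∂volume := by
    apply Summable.of_nonneg_of_le
      (fun n => integral_nonneg fun θ => norm_nonneg _)
      (fun n => ?_)
      (((summable_geometric_of_lt_one hb0.le hb1).mul_left 2).mul_right π)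
    have hconst : MeasureTheory.IntegrableOn (fun _ : ℝ => 2 * b ^ n)
        (Set.Ioc (0:ℝ) π) :=
      MeasureTheory.integrableOn_const (by simp)
    calc (∫ θ in Set.Ioc (0:ℝ) π, ‖F n θ‖ ∂volume)
        ≤ ∫ _θ in Set.Ioc (0:ℝ) π, 2 * b ^ n ∂volume :=
          MeasureTheory.setIntegral_mono_on ((hFint n).norm) hconst
            measurableSet_Ioc (fun θ _ => hbound n θ)
      _ = 2 * b ^ n * π := by
          rw [MeasureTheory.setIntegral_const, measureReal_def, Real.volume_Ioc]
          rw [ENNReal.toReal_ofReal (by linarith [Real.pi_pos])]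
          simp [smul_eq_mul]; ring
  have hinter : ∫ θ in (0:ℝ)..π, Real.log (1 - 2*b*Real.cos θ + b^2) * Real.sin θ ^ 2
      = ∑' n, ∫ θ in (0:ℝ)..π, F n θ := by
    rw [intervalIntegral.integral_of_le Real.pi_pos.le]
    rw [show (fun θ => Real.log (1 - 2*b*Real.cos θ + b^2) * Real.sin θ ^ 2)
      = fun θ => ∑' n, F n θ from funext hpt]
    rw [← MeasureTheory.integral_tsum_of_summable_integral_norm hFint hsum]
    congr 1; funext n
    rw [intervalIntegral.integral_of_le Real.pi_pos.le]
  rw [hinter]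
  have hterm : ∀ n : ℕ, n ≠ 2 → (∫ θ in (0:ℝ)..π, F n θ) = 0 := by
    intro n hn2
    simp only [hF]
    rw [intervalIntegral.integral_const_mul]
    rcases Nat.eq_zero_or_pos n with rfl | hn
    · simp
    rw [integral_cos_mul_sin_sq hn hn2, mul_zero]
  rw [tsum_eq_single 2 hterm]
  simp only [hF]
  rw [intervalIntegral.integral_const_mul]
  rw [show ((2:ℕ):ℝ) = (2:ℝ) by norm_num, integral_cos_two_mul_sin_sq]
  ring

theorem stmt_0 (x : ℝ) (hx : 1 < x) :
    (2 / π) * ∫ t in (-1 : ℝ)..1, Real.log |x - t| * Real.sqrt (1 - t ^ 2) =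
      x ^ 2 - x * Real.sqrt (x ^ 2 - 1)
        - Real.log (2 * (x - Real.sqrt (x ^ 2 - 1))) - 1 / 2 := by
  set s : ℝ := Real.sqrt (x ^ 2 - 1) with hs
  have hs0 : 0 ≤ s := Real.sqrt_nonneg _
  have hs2 : s ^ 2 = x ^ 2 - 1 := Real.sq_sqrt (by nlinarith)
  have hsx : s < x := by nlinarith
  set b : ℝ := x - s with hb
  have hb0 : 0 < b := by simp only [hb]; linarith
  have hb1 : b < 1 := by nlinarith
  have hkey : 1 + b ^ 2 = 2 * b * x := by simp only [hb]; nlinarith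
  -- the integrand as a function on [-1,1]
  set g : ℝ → ℝ := fun t => Real.log (x - t) * Real.sqrt (1 - t ^ 2) with hg
  -- Step A: remove abs
  have stepA : (∫ t in (-1 : ℝ)..1, Real.log |x - t| * Real.sqrt (1 - t ^ 2))
      = ∫ t in (-1 : ℝ)..1, g t := by
    apply intervalIntegral.integral_congr
    intro t ht
    rw [Set.uIcc_of_le (by norm_num : (-1:ℝ) ≤ 1)] at ht
    have habs : |x - t| = x - t := abs_of_pos (by linarith [ht.2])
    show Real.log |x - t| * Real.sqrt (1 - t ^ 2) = g t
    rw [hg, habs]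
  -- Step B: substitution t = cos θ
  have hgcont : ContinuousOn g (Set.Icc (-1 : ℝ) 1) := by
    apply ContinuousOn.mul
    · apply ContinuousOn.log (by fun_prop)
      intro t ht
      have := ht.2
      intro h0
      have : x = t := by linarith [sub_eq_zero.mp h0]
      linarith [ht.2, this ▸ hx]
    · fun_prop
  have stepB : (∫ t in (-1 : ℝ)..1, g t) = ∫ θ in (0:ℝ)..π, Real.sin θ * g (Real.cos θ) := by
    have himg : Real.cos '' (Set.uIcc 0 π) ⊆ Set.Icc (-1 : ℝ) 1 := by
      rintro y ⟨θ, _, rfl⟩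
      exact ⟨Real.neg_one_le_cos θ, Real.cos_le_one θ⟩
    have hsub := intervalIntegral.integral_comp_smul_deriv''
      (f := Real.cos) (f' := fun θ => -Real.sin θ) (g := g) (a := 0) (b := π)
      Real.continuous_cos.continuousOn
      (fun θ _ => (Real.hasDerivAt_cos θ).hasDerivWithinAt)
      Real.continuous_sin.neg.continuousOn
      (hgcont.mono himg)
    rw [Real.cos_zero, Real.cos_pi] at hsub
    rw [intervalIntegral.integral_symm 1 (-1), ← hsub, ← intervalIntegral.integral_neg]
    apply intervalIntegral.integral_congr
    intro θ _
    simp only [smul_eq_mul, hg, Function.comp]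
    ring
  -- Step C: simplify integrand on [0, π]
  have stepC : (∫ θ in (0:ℝ)..π, Real.sin θ * g (Real.cos θ))
      = ∫ θ in (0:ℝ)..π, Real.log (x - Real.cos θ) * Real.sin θ ^ 2 := by
    apply intervalIntegral.integral_congr
    intro θ hθ
    rw [Set.uIcc_of_le Real.pi_pos.le] at hθ
    have hsin : 0 ≤ Real.sin θ := Real.sin_nonneg_of_nonneg_of_le_pi hθ.1 hθ.2
    have hsq : Real.sqrt (1 - Real.cos θ ^ 2) = Real.sin θ := by
      rw [show 1 - Real.cos θ ^ 2 = Real.sin θ ^ 2 by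
        have := Real.sin_sq_add_cos_sq θ; linarith]
      exact Real.sqrt_sq hsin
    simp only [hg, hsq]
    ring
  -- Step D: log decomposition
  have stepD : (∫ θ in (0:ℝ)..π, Real.log (x - Real.cos θ) * Real.sin θ ^ 2)
      = π * b ^ 2 / 4 - Real.log (2 * b) * (π / 2) := by
    have hdecomp : ∀ θ : ℝ, Real.log (x - Real.cos θ) * Real.sin θ ^ 2
        = Real.log (1 - 2*b*Real.cos θ + b^2) * Real.sin θ ^ 2
          - Real.log (2 * b) * Real.sin θ ^ 2 := by
      intro θ
      have hxc : 0 < x - Real.cos θ := by linarith [Real.cos_le_one θ]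
      have hfac : 1 - 2*b*Real.cos θ + b^2 = (2*b) * (x - Real.cos θ) := by
        nlinarith [hkey]
      rw [hfac, Real.log_mul (by positivity) (ne_of_gt hxc)]
      ring
    rw [intervalIntegral.integral_congr (fun θ _ => hdecomp θ)]
    have hint1 : IntervalIntegrable
        (fun θ => Real.log (1 - 2*b*Real.cos θ + b^2) * Real.sin θ ^ 2)
        volume 0 π := by
      apply ContinuousOn.intervalIntegrable
      apply ContinuousOn.mul _ (by fun_prop)
      apply ContinuousOn.log (by fun_prop)
      intro θ _
      have hxc : 0 < x - Real.cos θ := by linarith [Real.cos_le_one θ]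
      nlinarith [hkey]
    have hint2 : IntervalIntegrable
        (fun θ => Real.log (2 * b) * Real.sin θ ^ 2) volume 0 π := by
      apply Continuous.intervalIntegrable; fun_prop
    rw [intervalIntegral.integral_sub hint1 hint2, J_val hb0 hb1,
      intervalIntegral.integral_const_mul, integral_sin_sq]
    simp [Real.sin_pi]
  rw [stepA, stepB, stepC, stepD]
  have hπ : (π : ℝ) ≠ 0 := Real.pi_ne_zero
  have hfinal : (2 / π) * (π * b ^ 2 / 4 - Real.log (2 * b) * (π / 2))
      = b ^ 2 / 2 - Real.log (2 * b) := by
    field_simp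
    ring
  rw [hfinal]
  have : b ^ 2 / 2 = x ^ 2 - x * s - 1 / 2 := by
    simp only [hb]; nlinarith
  rw [this, hb]
  ring
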